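/- Let p ≥ 2, let (θ_s)_{s=1}^p and (θ_{st})_{1 ≤ s < t ≤ p} be real numbers, and consider the integral I = ∫_{[0,∞)^p} exp( −Σ_{s=1}^p θ_s x_s − Σ_{1 ≤ s < t ≤ p} θ_{st} x_s x_t ) dx. (i) If θ_s > 0 for all s and θ_{st} ≥ 0 for all s < t, then I ≤ Π_{s=1}^p (1/θ_s) < ∞. (ii) If θ_{st} < 0 for some pair s < t, then I = +∞. -/

import Mathlib

open Finset MeasureTheory
open scoped ENNReal

lemma aux_restrict_pi {ι : Type*} [Fintype ι] (μ : ι → Measure ℝ) [∀ i, SigmaFinite (μ i)]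
    (s : ι → Set ℝ) (hs : ∀ i, MeasurableSet (s i)) :
    (Measure.pi μ).restrict (Set.pi Set.univ s) = Measure.pi (fun i => (μ i).restrict (s i)) := by
  have inst : ∀ i, SigmaFinite ((μ i).restrict (s i)) := fun i => inferInstance
  refine (Measure.pi_eq (μ := fun i => (μ i).restrict (s i)) fun t ht => ?_).symm
  rw [Measure.restrict_apply (MeasurableSet.univ_pi ht), ← Set.pi_inter_distrib, Measure.pi_pi]
  exact Finset.prod_congr rfl fun i _ => (Measure.restrict_apply (ht i)).symm

lemma aux_lintegral_pi : ∀ {n : ℕ} (μ : Fin n → Measure ℝ) [∀ i, SigmaFinite (μ i)]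
    (f : Fin n → ℝ → ℝ≥0∞), (∀ i, Measurable (f i)) →
    ∫⁻ x : Fin n → ℝ, ∏ i, f i (x i) ∂(Measure.pi μ) = ∏ i, ∫⁻ y, f i y ∂(μ i) := by
  intro n
  induction n with
  | zero =>
      intro μ _ f _
      simp [lintegral_one, Measure.pi_univ]
  | succ n ih =>
      intro μ _ f hf
      rw [← ((measurePreserving_piFinSuccAbove μ 0).symm).lintegral_comp_emb
        (MeasurableEquiv.measurableEmbedding _)]
      simp_rw [MeasurableEquiv.piFinSuccAbove_symm_apply, Fin.insertNthEquiv,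
        Fin.prod_univ_succ, Fin.insertNth_zero, Equiv.coe_fn_mk, Fin.cons_succ, Fin.cons_zero,
        Fin.zero_succAbove, cast_eq]
      calc ∫⁻ (a : ℝ × (Fin n → ℝ)), f 0 a.1 * ∏ x : Fin n, f x.succ (a.2 x)
            ∂(μ 0).prod (Measure.pi fun j => μ j.succ)
          = (∫⁻ y, f 0 y ∂μ 0) *
              ∫⁻ y : Fin n → ℝ, ∏ i : Fin n, f i.succ (y i)
                ∂(Measure.pi fun j => μ j.succ) :=
            lintegral_prod_mul (hf 0).aemeasurable
              (Finset.measurable_prod _ fun (i : Fin n) _ =>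
                ((hf i.succ).comp (measurable_pi_apply i))).aemeasurable
        _ = (∫⁻ y, f 0 y ∂μ 0) * ∏ i : Fin n, ∫⁻ y, f i.succ y ∂μ i.succ := by
            rw [ih _ (fun i : Fin n => f i.succ) (fun i : Fin n => hf i.succ)]

lemma aux_one_dim {θ : ℝ} (hθ : 0 < θ) :
    ∫⁻ y in Set.Ici (0:ℝ), ENNReal.ofReal (Real.exp (-(θ * y))) = ENNReal.ofReal (1 / θ) := by
  have h1 : ∫⁻ x, ProbabilityTheory.exponentialPDF θ x = 1 :=
    ProbabilityTheory.lintegral_exponentialPDF_eq_one hθ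
  rw [← lintegral_add_compl _ (measurableSet_Ici (a := (0:ℝ)))] at h1
  have h0 : ∫⁻ x in (Set.Ici (0:ℝ))ᶜ, ProbabilityTheory.exponentialPDF θ x = 0 := by
    rw [Set.compl_Ici]
    rw [setLIntegral_congr_fun measurableSet_Iio
      (fun x hx => ProbabilityTheory.exponentialPDF_of_neg hx),
      lintegral_zero]
  rw [h0, add_zero] at h1
  have h3 : ∫⁻ x in Set.Ici (0:ℝ), ENNReal.ofReal (θ * Real.exp (-(θ * x))) = 1 := by
    rw [← h1]
    exact setLIntegral_congr_fun measurableSet_Ici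
      (fun x hx =>
        (ProbabilityTheory.exponentialPDF_of_nonneg hx).symm)
  calc ∫⁻ y in Set.Ici (0:ℝ), ENNReal.ofReal (Real.exp (-(θ * y)))
      = ∫⁻ y in Set.Ici (0:ℝ),
          ENNReal.ofReal θ⁻¹ * ENNReal.ofReal (θ * Real.exp (-(θ * y))) := by
        refine lintegral_congr fun y => ?_
        rw [← ENNReal.ofReal_mul (by positivity), ← mul_assoc, inv_mul_cancel₀ hθ.ne', one_mul]
    _ = ENNReal.ofReal θ⁻¹ * ∫⁻ y in Set.Ici (0:ℝ), ENNReal.ofReal (θ * Real.exp (-(θ * y))) :=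
        lintegral_const_mul' _ _ ENNReal.ofReal_ne_top
    _ = ENNReal.ofReal (1 / θ) := by rw [h3, mul_one, one_div]

/-- Normalizability of the exponential graphical model: for
`I = ∫_{[0,∞)^p} exp(-Σ_s θ_s x_s - Σ_{s<t} θ_{st} x_s x_t) dx`,
(i) if all `θ_s > 0` and all `θ_{st} ≥ 0` (for `s < t`) then
`I ≤ Π_s (1/θ_s) < ∞`, and (ii) if some `θ_{st} < 0` then `I = +∞`. -/
theorem exponential_graphical_model_normalizability
    {p : ℕ} (hp : 2 ≤ p) (θ : Fin p → ℝ) (θ₂ : Fin p → Fin p → ℝ)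
    (I : ℝ≥0∞)
    (hI : I = ∫⁻ x in {x : Fin p → ℝ | ∀ s, 0 ≤ x s},
      ENNReal.ofReal (Real.exp (-∑ s, θ s * x s -
        ∑ s, ∑ t ∈ Finset.Ioi s, θ₂ s t * x s * x t)) ∂volume) :
    ((∀ s, 0 < θ s) → (∀ s t, s < t → 0 ≤ θ₂ s t) →
      I ≤ ENNReal.ofReal (∏ s, 1 / θ s) ∧ I ≠ ⊤) ∧
    ((∃ s t, s < t ∧ θ₂ s t < 0) → I = ⊤) := by
  have hSeq : {x : Fin p → ℝ | ∀ s, 0 ≤ x s}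
      = Set.pi Set.univ (fun _ : Fin p => Set.Ici (0:ℝ)) := by
    ext x
    simp only [Set.mem_univ_pi, Set.mem_Ici, Set.mem_setOf_eq]
  have fmeas : Measurable (fun x : Fin p → ℝ => ENNReal.ofReal (Real.exp (-∑ u, θ u * x u -
      ∑ u, ∑ v ∈ Finset.Ioi u, θ₂ u v * x u * x v))) := by
    apply Measurable.ennreal_ofReal
    apply Real.measurable_exp.comp
    apply Measurable.sub
    · fun_prop
    · fun_prop
  constructor
  · intro hθ hθ₂
    have gmeas : Measurable fun x : Fin p → ℝ =>
        ∏ u, ENNReal.ofReal (Real.exp (-(θ u * x u))) :=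
      Finset.measurable_prod _ fun u _ =>
        by fun_prop
    have key : I ≤ ENNReal.ofReal (∏ s, 1 / θ s) := by
      rw [hI]
      calc ∫⁻ x in {x : Fin p → ℝ | ∀ s, 0 ≤ x s},
            ENNReal.ofReal (Real.exp (-∑ s, θ s * x s -
              ∑ s, ∑ t ∈ Finset.Ioi s, θ₂ s t * x s * x t)) ∂volume
          ≤ ∫⁻ x in {x : Fin p → ℝ | ∀ s, 0 ≤ x s},
              ∏ u, ENNReal.ofReal (Real.exp (-(θ u * x u))) ∂volume := by
            refine setLIntegral_mono gmeas fun x hx => ?_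
            rw [← ENNReal.ofReal_prod_of_nonneg (fun u _ => (Real.exp_pos _).le),
              ← Real.exp_sum]
            refine ENNReal.ofReal_le_ofReal (Real.exp_le_exp.2 ?_)
            have h1 : ∑ u, -(θ u * x u) = -∑ u, θ u * x u := by
              rw [Finset.sum_neg_distrib]
            have hQ : 0 ≤ ∑ u, ∑ v ∈ Finset.Ioi u, θ₂ u v * x u * x v :=
              Finset.sum_nonneg fun u _ => Finset.sum_nonneg fun v hv =>
                mul_nonneg (mul_nonneg (hθ₂ u v (Finset.mem_Ioi.mp hv)) (hx u)) (hx v)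
            rw [h1]; linarith
        _ = ∫⁻ x, ∏ u, ENNReal.ofReal (Real.exp (-(θ u * x u)))
              ∂(Measure.pi fun _ : Fin p => volume.restrict (Set.Ici (0:ℝ))) := by
            rw [hSeq, volume_pi, aux_restrict_pi _ _ (fun _ => measurableSet_Ici)]
        _ = ∏ u, ∫⁻ y in Set.Ici (0:ℝ), ENNReal.ofReal (Real.exp (-(θ u * y))) :=
            aux_lintegral_pi _ (fun u y => ENNReal.ofReal (Real.exp (-(θ u * y))))
              (fun u =>
                (Real.measurable_exp.comp (measurable_id.const_mul (θ u)).neg).ennreal_ofReal)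
        _ = ∏ u, ENNReal.ofReal (1 / θ u) :=
            Finset.prod_congr rfl fun u _ => aux_one_dim (hθ u)
        _ = ENNReal.ofReal (∏ u, 1 / θ u) :=
            (ENNReal.ofReal_prod_of_nonneg fun u _ => by
              have := hθ u; positivity).symm
    exact ⟨key, ne_top_of_le_ne_top ENNReal.ofReal_ne_top key⟩
  · rintro ⟨s, t, hst, hneg⟩
    set c := -θ₂ s t with hc
    have hc0 : 0 < c := neg_pos.2 hneg
    set C := (∑ u, |θ u|) + ∑ u, ∑ v ∈ Finset.Ioi u, |θ₂ u v| with hC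
    have main : ∀ M : ℝ, 0 ≤ M →
        ENNReal.ofReal (Real.exp (c * M^2 - C * (M + 1))) ≤ I := by
      intro M hM
      set a : Fin p → ℝ := fun u => if u = s ∨ u = t then M else 0 with ha
      have ha0 : ∀ u, 0 ≤ a u := by
        intro u; dsimp only [a]; split
        · exact hM
        · exact le_refl 0
      have haM : ∀ u, a u ≤ M := by
        intro u; dsimp only [a]; split
        · exact le_refl M
        · exact hM
      set B := Set.pi Set.univ (fun u => Set.Icc (a u) (a u + 1)) with hB
      have hBsub : B ⊆ {x : Fin p → ℝ | ∀ u, 0 ≤ x u} := by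
        intro x hx u
        exact le_trans (ha0 u) (hx u (Set.mem_univ u)).1
      have hvol : volume B = 1 := by
        rw [hB, volume_pi, Measure.pi_pi]
        simp [Real.volume_Icc]
      have hbound : ∀ x ∈ B, ENNReal.ofReal (Real.exp (c * M^2 - C * (M + 1)))
          ≤ ENNReal.ofReal (Real.exp (-∑ u, θ u * x u -
              ∑ u, ∑ v ∈ Finset.Ioi u, θ₂ u v * x u * x v)) := by
        intro x hx
        refine ENNReal.ofReal_le_ofReal (Real.exp_le_exp.2 ?_)
        have hx0 : ∀ u, 0 ≤ x u := fun u => le_trans (ha0 u) (hx u (Set.mem_univ u)).1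
        have hxM : ∀ u, x u ≤ M + 1 := fun u =>
          le_trans (hx u (Set.mem_univ u)).2 (by linarith [haM u])
        have hx1 : ∀ u, ¬(u = s ∨ u = t) → x u ≤ 1 := by
          intro u hu
          have h2 := (hx u (Set.mem_univ u)).2
          dsimp only [a] at h2
          rw [if_neg hu] at h2
          linarith
        have hxs : M ≤ x s := by
          have h2 := (hx s (Set.mem_univ s)).1
          dsimp only [a] at h2
          rwa [if_pos (Or.inl rfl)] at h2
        have hxt : M ≤ x t := by
          have h2 := (hx t (Set.mem_univ t)).1
          dsimp only [a] at h2
          rwa [if_pos (Or.inr rfl)] at h2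
        have hlin : ∑ u, θ u * x u ≤ (∑ u, |θ u|) * (M + 1) := by
          rw [Finset.sum_mul]
          refine Finset.sum_le_sum fun u _ => ?_
          calc θ u * x u ≤ |θ u| * x u := mul_le_mul_of_nonneg_right (le_abs_self _) (hx0 u)
            _ ≤ |θ u| * (M + 1) := mul_le_mul_of_nonneg_left (hxM u) (abs_nonneg _)
        have hquad : ∑ u, ∑ v ∈ Finset.Ioi u, θ₂ u v * x u * x v
            ≤ -(c * M^2) + (∑ u, ∑ v ∈ Finset.Ioi u, |θ₂ u v|) * (M + 1) := by
          have step : ∀ u : Fin p, ∀ v ∈ Finset.Ioi u, θ₂ u v * x u * x v ≤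
              (if u = s ∧ v = t then -(c * M^2) else 0) + |θ₂ u v| * (M + 1) := by
            intro u v hv
            have hv' : u < v := Finset.mem_Ioi.mp hv
            by_cases h : u = s ∧ v = t
            · obtain ⟨hu1, hv1⟩ := h
              subst hu1; subst hv1
              rw [if_pos ⟨rfl, rfl⟩]
              have h1 : c * M^2 ≤ c * (x u * x v) := by
                refine mul_le_mul_of_nonneg_left ?_ hc0.le
                calc M^2 = M * M := sq M
                  _ ≤ x u * x v := mul_le_mul hxs hxt hM (hx0 u)
              have h2 : θ₂ u v * x u * x v = -(c * (x u * x v)) := by rw [hc]; ring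
              have h3 : 0 ≤ |θ₂ u v| * (M + 1) :=
                mul_nonneg (abs_nonneg _) (by linarith)
              linarith
            · rw [if_neg h, zero_add]
              have hprod : x u * x v ≤ M + 1 := by
                have hcase : x u ≤ 1 ∨ x v ≤ 1 := by
                  by_cases hu : u = s ∨ u = t
                  · right
                    refine hx1 v ?_
                    rintro (rfl | rfl)
                    · rcases hu with rfl | rfl
                      · exact lt_irrefl _ hv'
                      · exact absurd hv' (not_lt.2 hst.le)
                    · rcases hu with rfl | rfl
                      · exact h ⟨rfl, rfl⟩
                      · exact lt_irrefl _ hv'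
                  · left; exact hx1 u hu
                rcases hcase with h1 | h1
                · calc x u * x v ≤ 1 * (M + 1) :=
                      mul_le_mul h1 (hxM v) (hx0 v) (by norm_num)
                    _ = M + 1 := one_mul _
                · calc x u * x v ≤ (M + 1) * 1 :=
                      mul_le_mul (hxM u) h1 (hx0 v) (by linarith)
                    _ = M + 1 := mul_one _
              calc θ₂ u v * x u * x v = θ₂ u v * (x u * x v) := mul_assoc _ _ _
                _ ≤ |θ₂ u v| * (x u * x v) :=
                    mul_le_mul_of_nonneg_right (le_abs_self _)
                      (mul_nonneg (hx0 u) (hx0 v))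
                _ ≤ |θ₂ u v| * (M + 1) :=
                    mul_le_mul_of_nonneg_left hprod (abs_nonneg _)
          have hite : ∑ u : Fin p, ∑ v ∈ Finset.Ioi u,
              (if u = s ∧ v = t then -(c * M^2) else 0) = -(c * M^2) := by
            rw [Finset.sum_eq_single s]
            · rw [Finset.sum_eq_single t]
              · rw [if_pos ⟨rfl, rfl⟩]
              · intro v _ hvt; rw [if_neg (fun hh => hvt hh.2)]
              · intro hmem; exact absurd (Finset.mem_Ioi.mpr hst) hmem
            · intro u _ hus
              exact Finset.sum_eq_zero fun v _ => by rw [if_neg (fun hh => hus hh.1)]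
            · intro hmem; exact absurd (Finset.mem_univ s) hmem
          calc ∑ u, ∑ v ∈ Finset.Ioi u, θ₂ u v * x u * x v
              ≤ ∑ u : Fin p, ∑ v ∈ Finset.Ioi u,
                  ((if u = s ∧ v = t then -(c * M^2) else 0) + |θ₂ u v| * (M + 1)) :=
                Finset.sum_le_sum fun u _ => Finset.sum_le_sum fun v hv => step u v hv
            _ = -(c * M^2) + (∑ u, ∑ v ∈ Finset.Ioi u, |θ₂ u v|) * (M + 1) := by
                simp only [Finset.sum_add_distrib, hite, Finset.sum_mul]
        have hCexp : C * (M + 1) = (∑ u, |θ u|) * (M + 1)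
            + (∑ u, ∑ v ∈ Finset.Ioi u, |θ₂ u v|) * (M + 1) := by
          rw [hC]; ring
        linarith
      rw [hI]
      calc ENNReal.ofReal (Real.exp (c * M^2 - C * (M + 1)))
          = ENNReal.ofReal (Real.exp (c * M^2 - C * (M + 1))) * volume B := by
            rw [hvol, mul_one]
        _ = ∫⁻ _ in B, ENNReal.ofReal (Real.exp (c * M^2 - C * (M + 1))) ∂volume :=
            (setLIntegral_const _ _).symm
        _ ≤ ∫⁻ x in B, ENNReal.ofReal (Real.exp (-∑ u, θ u * x u -
              ∑ u, ∑ v ∈ Finset.Ioi u, θ₂ u v * x u * x v)) ∂volume :=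
            setLIntegral_mono fmeas hbound
        _ ≤ ∫⁻ x in {x : Fin p → ℝ | ∀ s, 0 ≤ x s},
              ENNReal.ofReal (Real.exp (-∑ s, θ s * x s -
                ∑ s, ∑ t ∈ Finset.Ioi s, θ₂ s t * x s * x t)) ∂volume :=
            lintegral_mono_set hBsub
    apply ENNReal.eq_top_of_forall_nnreal_le
    intro r
    have htend : Filter.Tendsto (fun M : ℝ => c * M^2 - C * (M + 1))
        Filter.atTop Filter.atTop := by
      have h1 : Filter.Tendsto (fun M : ℝ => c * M - C) Filter.atTop Filter.atTop := by
        have := Filter.tendsto_atTop_add_const_right Filter.atTop (-C)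
          (Filter.Tendsto.const_mul_atTop hc0 Filter.tendsto_id)
        simpa [sub_eq_add_neg] using this
      have h2 : Filter.Tendsto (fun M : ℝ => M * (c * M - C)) Filter.atTop Filter.atTop :=
        Filter.Tendsto.atTop_mul_atTop₀ Filter.tendsto_id h1
      have h3 := Filter.tendsto_atTop_add_const_right Filter.atTop (-C) h2
      exact Filter.Tendsto.congr (fun M => by ring) h3
    have hev := (Real.tendsto_exp_atTop.comp htend).eventually_ge_atTop (r : ℝ)
    obtain ⟨M, hM1, hM2⟩ := (hev.and (Filter.eventually_ge_atTop (0:ℝ))).exists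
    calc (r : ℝ≥0∞) = ENNReal.ofReal (r : ℝ) := by rw [ENNReal.ofReal_coe_nnreal]
      _ ≤ ENNReal.ofReal (Real.exp (c * M^2 - C * (M + 1))) := ENNReal.ofReal_le_ofReal hM1
      _ ≤ I := main M hM2
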